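/- For any linear operator A on C^{2S+1}, Tr(A) = (2S+1)/(4π) ∫_{S²} ⟨Ω|A|Ω⟩ dΩ, where the integral is over the 2-sphere with uniform surface measure of total mass 4π. -/

import Mathlib

open Real intervalIntegral

lemma int_exp (m : ℤ) :
    (∫ x in (0:ℝ)..(2*Real.pi), Complex.exp (Complex.I * (m:ℂ) * x))
      = if m = 0 then (2*Real.pi : ℂ) else 0 := by
  rcases eq_or_ne m 0 with h | h
  · simp [h]
  · rw [if_neg h]
    have hc : Complex.I * (m:ℂ) ≠ 0 := by
      simp [Complex.I_ne_zero, Int.cast_ne_zero, h]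
    have key := integral_exp_mul_complex (a := 0) (b := 2*Real.pi) hc
    simp only [mul_assoc] at key ⊢
    rw [key]
    push_cast
    have h1 : Complex.exp (Complex.I * ((m:ℂ) * (2*(Real.pi:ℂ)))) = 1 := by
      rw [show Complex.I * ((m:ℂ) * (2*(Real.pi:ℂ))) = (m:ℂ) * (2*Real.pi*Complex.I) by ring]
      exact Complex.exp_int_mul_two_pi_mul_I m
    simp [h1]


open scoped Nat in
lemma prod_fact (a b : ℕ) : b ! * ∏ j ∈ Finset.range (a+1), (b+1+j) = (a+b+1)! := by
  induction a with
  | zero => simp [Nat.factorial_succ]; ring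
  | succ a ih =>
      rw [Finset.prod_range_succ, ← mul_assoc, ih]
      have h2 : a+1+b+1 = (a+b+1)+1 := by omega
      rw [h2, Nat.factorial_succ (a+b+1)]
      ring

open scoped Nat in
lemma beta_nat (a b : ℕ) :
    (∫ x in (0:ℝ)..1, x^b * (1-x)^a) = a ! * b ! / ((a+b+1)! : ℝ) := by
  have h := Complex.betaIntegral_eval_nat_add_one_right
    (u := ((b:ℕ):ℂ)+1) (by simp; positivity) a
  rw [Complex.betaIntegral] at h
  have heq : ∀ x : ℝ, ((x:ℂ)) ^ (((b:ℕ):ℂ)+1-1) * (1 - (x:ℂ)) ^ (((a:ℕ):ℂ)+1-1)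
      = ((x^b * (1-x)^a : ℝ) : ℂ) := by
    intro x
    rw [add_sub_cancel_right, add_sub_cancel_right, Complex.cpow_natCast, Complex.cpow_natCast]
    push_cast; ring
  rw [intervalIntegral.integral_congr (g := fun x : ℝ => ((x^b * (1-x)^a : ℝ) : ℂ))
    (fun x _ => heq x)] at h
  rw [intervalIntegral.integral_ofReal] at h
  have hb : ((b)! : ℂ) ≠ 0 := by exact_mod_cast (Nat.factorial_pos b).ne'
  have hprod : (∏ j ∈ Finset.range (a+1), (((b:ℕ):ℂ)+1+(j:ℕ))) = ((a+b+1)! : ℂ) / (b ! : ℂ) := by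
    rw [eq_div_iff hb]
    have := prod_fact a b
    calc (∏ j ∈ Finset.range (a+1), (((b:ℕ):ℂ)+1+(j:ℕ))) * (b ! : ℂ)
        = (b ! : ℂ) * ∏ j ∈ Finset.range (a+1), (((b+1+j : ℕ)):ℂ) := by
          rw [mul_comm]; congr 1; apply Finset.prod_congr rfl; intro j _; push_cast; ring
      _ = ((a+b+1)! : ℂ) := by rw [← Nat.cast_prod, ← Nat.cast_mul, this]
  rw [hprod] at h
  have h2 : ((∫ x in (0:ℝ)..1, x^b * (1-x)^a : ℝ) : ℂ) = ((a ! * b ! / ((a+b+1)! : ℝ) : ℝ) : ℂ) := by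
    rw [h]
    have hab : (((a+b+1)! : ℂ)) ≠ 0 := by exact_mod_cast (Nat.factorial_pos _).ne'
    simp only [Complex.ofReal_div, Complex.ofReal_mul, Complex.ofReal_natCast]
    rw [div_div_eq_mul_div]
  exact_mod_cast h2


open scoped Nat in
lemma theta_int (n k : ℕ) (hk : k ≤ n) :
    (∫ θ in (0:ℝ)..Real.pi, Real.sin θ * Real.cos (θ/2)^(2*k) * Real.sin (θ/2)^(2*(n-k)))
      = 2 * (k ! * (n-k)! / ((n+1)! : ℝ)) := by
  have hderiv : ∀ θ ∈ Set.uIcc (0:ℝ) Real.pi,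
      HasDerivAt (fun t => Real.sin (t/2)^2) (Real.sin (θ/2)*Real.cos (θ/2)) θ := by
    intro θ _
    have h1 : HasDerivAt (fun t:ℝ => t/2) (1/2) θ := (hasDerivAt_id θ).div_const 2
    have h2 : HasDerivAt (fun t => Real.sin (t/2)) (Real.cos (θ/2) * (1/2)) θ :=
      by have := (Real.hasDerivAt_sin (θ/2)).comp θ h1; exact this
    have h3 := h2.fun_pow 2
    refine h3.congr_deriv ?_
    push_cast; ring
  have hcont : ContinuousOn (fun θ : ℝ => Real.sin (θ/2)*Real.cos (θ/2)) (Set.uIcc 0 Real.pi) := by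
    fun_prop
  have hg : Continuous (fun u : ℝ => 2*(u^(n-k)*(1-u)^k)) := by fun_prop
  have key := intervalIntegral.integral_comp_smul_deriv hderiv hcont hg
  have hend : Real.sin (Real.pi/2)^2 = 1 := by
    rw [Real.sin_pi_div_two]; norm_num
  have hzero : Real.sin ((0:ℝ)/2)^2 = 0 := by norm_num
  rw [hzero, hend] at key
  have hcongr : ∀ θ : ℝ,
      Real.sin θ * Real.cos (θ/2)^(2*k) * Real.sin (θ/2)^(2*(n-k))
        = (Real.sin (θ/2)*Real.cos (θ/2)) •
          ((fun u : ℝ => 2*(u^(n-k)*(1-u)^k)) ∘ (fun t => Real.sin (t/2)^2)) θ := by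
    intro θ
    have hs : Real.sin θ = 2 * Real.sin (θ/2) * Real.cos (θ/2) := by
      rw [show θ = 2*(θ/2) by ring, Real.sin_two_mul]
      ring_nf
    have hc : Real.cos (θ/2)^2 = 1 - Real.sin (θ/2)^2 := by
      rw [Real.cos_sq']
    simp only [Function.comp, smul_eq_mul]
    rw [hs, pow_mul, pow_mul, hc]
    ring
  rw [intervalIntegral.integral_congr (fun θ _ => hcongr θ), key,
    intervalIntegral.integral_const_mul, beta_nat k (n-k)]
  have : k + (n-k) + 1 = n + 1 := by omega
  rw [this]

open scoped Nat in
@[fun_prop]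
lemma continuous_conj_comp {f : ℝ → ℂ} (hf : Continuous f) :
    Continuous fun x => (starRingEnd ℂ) (f x) := Complex.continuous_conj.comp hf



/-- The spin-`S` Bloch coherent state for `2S = n`, expressed in the basis `|M⟩`
indexed by `k = S + M ∈ {0, …, n}`:
`|Ω⟩_k = binom(2S, S+M)^{1/2} (cos(θ/2))^{S+M} (sin(θ/2))^{S-M} e^{i(S-M)φ}`. -/
noncomputable def coherentState (n : ℕ) (θ φ : ℝ) : Fin (n + 1) → ℂ := fun k =>
  (Real.sqrt (n.choose k) : ℂ) * (Real.cos (θ / 2) : ℂ) ^ (k : ℕ)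
    * (Real.sin (θ / 2) : ℂ) ^ (n - (k : ℕ))
    * Complex.exp (Complex.I * ((n - (k : ℕ) : ℕ) : ℂ) * (φ : ℂ))

noncomputable def csB (n : ℕ) (θ : ℝ) (A : Matrix (Fin (n+1)) (Fin (n+1)) ℂ)
    (j k : Fin (n+1)) : ℂ :=
  ((Real.sin θ : ℝ) : ℂ) * (Real.sqrt (n.choose j) : ℂ) * (Real.sqrt (n.choose k) : ℂ)
    * (Real.cos (θ/2) : ℂ) ^ ((j:ℕ)+(k:ℕ)) * (Real.sin (θ/2) : ℂ) ^ ((n-(j:ℕ))+(n-(k:ℕ)))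
    * A j k

lemma cs_term (n : ℕ) (θ x : ℝ) (A : Matrix (Fin (n+1)) (Fin (n+1)) ℂ) (j k : Fin (n+1)) :
    ((Real.sin θ : ℝ) : ℂ) * ((starRingEnd ℂ) (coherentState n θ x j)
        * (A j k * coherentState n θ x k))
      = csB n θ A j k * Complex.exp (Complex.I * ((((j:ℕ):ℤ) - ((k:ℕ):ℤ) : ℤ):ℂ) * (x:ℂ)) := by
  have hconj : (starRingEnd ℂ) (Complex.exp (Complex.I * ((n-(j:ℕ):ℕ):ℂ) * (x:ℂ)))
      = Complex.exp (-(Complex.I * ((n-(j:ℕ):ℕ):ℂ) * (x:ℂ))) := by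
    rw [← Complex.exp_conj]
    congr 1
    simp [map_mul, Complex.conj_I, Complex.conj_ofReal]
  have hm : Complex.I * ((((j:ℕ):ℤ) - ((k:ℕ):ℤ) : ℤ):ℂ) * (x:ℂ)
      = -(Complex.I * ((n-(j:ℕ):ℕ):ℂ) * (x:ℂ)) + Complex.I * ((n-(k:ℕ):ℕ):ℂ) * (x:ℂ) := by
    push_cast [Nat.cast_sub j.is_le, Nat.cast_sub k.is_le]
    ring
  simp only [coherentState, map_mul, map_pow, Complex.conj_ofReal, hconj, csB]
  rw [hm, Complex.exp_add]
  ring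

open Matrix Finset in
lemma inner_int (n : ℕ) (A : Matrix (Fin (n+1)) (Fin (n+1)) ℂ) (θ : ℝ) :
    (∫ x in (0:ℝ)..(2*Real.pi),
        ((Real.sin θ : ℝ) : ℂ) * (star (coherentState n θ x) ⬝ᵥ A.mulVec (coherentState n θ x)))
      = ∑ k : Fin (n+1), ((2*Real.pi:ℂ) * ((n.choose k : ℕ):ℂ) * A k k)
          * ((Real.sin θ * Real.cos (θ/2)^(2*(k:ℕ)) * Real.sin (θ/2)^(2*(n-(k:ℕ))) : ℝ) : ℂ) := by
  have hexpand : ∀ x : ℝ,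
      ((Real.sin θ : ℝ) : ℂ) * (star (coherentState n θ x) ⬝ᵥ A.mulVec (coherentState n θ x))
        = ∑ j : Fin (n+1), ∑ k : Fin (n+1),
            ((Real.sin θ : ℝ) : ℂ) * ((starRingEnd ℂ) (coherentState n θ x j)
              * (A j k * coherentState n θ x k)) := by
    intro x
    simp only [dotProduct, Matrix.mulVec, dotProduct, Pi.star_apply, RCLike.star_def,
      Finset.mul_sum]
  rw [intervalIntegral.integral_congr (fun x _ => hexpand x)]
  rw [intervalIntegral.integral_finset_sum]
  · have hjk : ∀ j k : Fin (n+1),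
        (∫ x in (0:ℝ)..(2*Real.pi),
            ((Real.sin θ : ℝ) : ℂ) * ((starRingEnd ℂ) (coherentState n θ x j)
              * (A j k * coherentState n θ x k)))
          = if j = k then (2*Real.pi:ℂ) * csB n θ A j k else 0 := by
      intro j k
      rw [intervalIntegral.integral_congr (fun x _ => cs_term n θ x A j k),
        intervalIntegral.integral_const_mul, int_exp]
      rcases eq_or_ne j k with rfl | h
      · simp [mul_comm]
      · have hne : ((j:ℕ):ℤ) - ((k:ℕ):ℤ) ≠ 0 := by
          rw [sub_ne_zero]
          exact fun hh => h (Fin.ext (by exact_mod_cast hh))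
        rw [if_neg hne, if_neg h, mul_zero]
    have : ∀ j : Fin (n+1), (∫ x in (0:ℝ)..(2*Real.pi), ∑ k : Fin (n+1),
        ((Real.sin θ : ℝ) : ℂ) * ((starRingEnd ℂ) (coherentState n θ x j)
          * (A j k * coherentState n θ x k)))
        = ∑ k : Fin (n+1), if j = k then (2*Real.pi:ℂ) * csB n θ A j k else 0 := by
      intro j
      rw [intervalIntegral.integral_finset_sum]
      · exact Finset.sum_congr rfl fun k _ => hjk j k
      · intro k _
        apply Continuous.intervalIntegrable
        unfold coherentState
        fun_prop
    rw [Finset.sum_congr rfl fun j _ => this j]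
    simp only [Finset.sum_ite_eq, Finset.mem_univ, if_true]
    refine Finset.sum_congr rfl fun k _ => ?_
    unfold csB
    have hsq : (Real.sqrt (n.choose k) : ℂ) * (Real.sqrt (n.choose k) : ℂ)
        = ((n.choose k : ℕ):ℂ) := by
      rw [← Complex.ofReal_mul, Real.mul_self_sqrt (Nat.cast_nonneg _)]
      norm_num
    simp only [Complex.ofReal_mul, Complex.ofReal_pow]
    linear_combination ((2*Real.pi:ℂ) * ((Real.sin θ:ℝ):ℂ)
      * (Real.cos (θ/2):ℂ)^((k:ℕ)+(k:ℕ)) * (Real.sin (θ/2):ℂ)^((n-(k:ℕ))+(n-(k:ℕ)))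
      * A k k) * hsq
  · intro j _
    apply Continuous.intervalIntegrable
    unfold coherentState
    fun_prop


open Matrix Finset in
/-- Trace formula: for any linear operator `A` on `ℂ^{2S+1}` (with `2S = n`),
`Tr(A) = (2S+1)/(4π) ∫_{S²} ⟨Ω|A|Ω⟩ dΩ`, where the sphere is parametrized by the
spherical angles `(θ,φ)` with surface measure `sinθ dθ dφ` of total mass `4π`. -/
theorem trace_eq_integral_lower_symbol (n : ℕ) (A : Matrix (Fin (n + 1)) (Fin (n + 1)) ℂ) :
    A.trace
      = (((n : ℂ) + 1) / (4 * (Real.pi : ℂ)))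
        * ∫ θ in (0 : ℝ)..Real.pi, ∫ φ in (0 : ℝ)..(2 * Real.pi),
            ((Real.sin θ : ℝ) : ℂ)
              * (star (coherentState n θ φ) ⬝ᵥ A.mulVec (coherentState n θ φ)) := by
  have h1 : (∫ θ in (0:ℝ)..Real.pi, ∫ φ in (0:ℝ)..(2*Real.pi),
        ((Real.sin θ:ℝ):ℂ) * (star (coherentState n θ φ) ⬝ᵥ A.mulVec (coherentState n θ φ)))
      = ∑ k : Fin (n+1), ((2*Real.pi:ℂ) * ((n.choose k:ℕ):ℂ) * A k k)
          * ((2 * (Nat.factorial (k:ℕ) * Nat.factorial (n-(k:ℕ)) /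
              ((Nat.factorial (n+1) : ℕ):ℝ)) : ℝ):ℂ) := by
    rw [intervalIntegral.integral_congr (fun θ _ => inner_int n A θ)]
    rw [intervalIntegral.integral_finset_sum ?_]
    · refine Finset.sum_congr rfl fun k _ => ?_
      rw [intervalIntegral.integral_const_mul, intervalIntegral.integral_ofReal,
        theta_int n k k.is_le]
    · intro k _
      apply Continuous.intervalIntegrable
      fun_prop
  rw [h1, Matrix.trace, Finset.mul_sum]
  refine Finset.sum_congr rfl fun k _ => ?_
  have hπ : (Real.pi:ℂ) ≠ 0 := Complex.ofReal_ne_zero.mpr Real.pi_ne_zero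
  have hkf : ((Nat.factorial (k:ℕ) : ℕ):ℂ) ≠ 0 := by
    exact_mod_cast (Nat.factorial_pos _).ne'
  have hnkf : ((Nat.factorial (n-(k:ℕ)) : ℕ):ℂ) ≠ 0 := by
    exact_mod_cast (Nat.factorial_pos _).ne'
  have hn1 : ((n:ℂ)+1) ≠ 0 := Nat.cast_add_one_ne_zero n
  have hnf : ((Nat.factorial n : ℕ):ℂ) ≠ 0 := by exact_mod_cast (Nat.factorial_pos _).ne'
  have hch : ((n.choose (k:ℕ) : ℕ):ℂ) = ((Nat.factorial n : ℕ):ℂ)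
      / (((Nat.factorial (k:ℕ) : ℕ):ℂ) * ((Nat.factorial (n-(k:ℕ)) : ℕ):ℂ)) := by
    rw [eq_div_iff (mul_ne_zero hkf hnkf)]
    have := Nat.choose_mul_factorial_mul_factorial (k.is_le (n := n))
    push_cast [← this]
    ring
  have hfac : ((Nat.factorial (n+1) : ℕ):ℂ) = ((n:ℂ)+1) * ((Nat.factorial n : ℕ):ℂ) := by
    rw [Nat.factorial_succ]; push_cast; ring
  simp only [Matrix.diag_apply]
  push_cast [hch, hfac]
  field_simp
  ring
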